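/- arXiv:1607.06023 — 6 statements merged into one kernel-verified Lean document; each statement's English description precedes it below -/
import Mathlib

section
/- Let s be a global section of the activation sheaf A on X, and let n be a node whose active region active(s, n) = { c ∈ X : s(c) = n } is nonempty. Then the singleton {n} belongs to active(s, n). -/
/-- A finite abstract simplicial complex: a finite collection of nonempty finite
subsets of the vertex type `N`, closed under taking nonempty subsets. -/
def IsComplex {N : Type*} (X : Finset (Finset N)) : Prop :=
  ∀ c ∈ X, c.Nonempty ∧ ∀ b : Finset N, b ⊆ c → b.Nonempty → b ∈ X

/-- `n` lies in the stalk of the activation sheaf at the cell `c` (apart from `⊥`):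
`n` shares a coface with `c`. -/
def InStalk {N : Type*} (X : Finset (Finset N)) (c : Finset N) (n : N) : Prop :=
  ∃ d ∈ X, c ⊆ d ∧ n ∈ d

/-- A global section of the activation sheaf, encoded as a function assigning to each
cell either a node (`some n`) or `⊥` (`none`): the value at each cell lies in the
stalk, and the values are compatible with the restriction maps, which send `n` to `n`
when `n` is in the stalk of the larger cell and to `⊥` otherwise. -/
def IsSection {N : Type*} (X : Finset (Finset N)) (s : Finset N → Option N) : Prop :=
  (∀ c ∈ X, ∀ n : N, s c = some n → InStalk X c n) ∧
  (∀ c ∈ X, ∀ d ∈ X, c ⊆ d → ∀ n : N, s c = some n →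
    (InStalk X d n → s d = some n) ∧ (¬ InStalk X d n → s d = none)) ∧
  (∀ c ∈ X, ∀ d ∈ X, c ⊆ d → s c = none → s d = none)

/-- If the active region of a node `n` is nonempty, then the vertex `{n}` belongs to it. -/
theorem vertex_mem_activeRegion {N : Type*} [DecidableEq N] (X : Finset (Finset N))
    (hX : IsComplex X) (s : Finset N → Option N) (hs : IsSection X s) (n : N)
    (hne : ∃ c ∈ X, s c = some n) :
    {n} ∈ X ∧ s {n} = some n := by
  obtain ⟨c, hc, hsc⟩ := hne
  obtain ⟨hstalk, hcompat, hnone⟩ := hs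
  obtain ⟨d, hd, hcd, hnd⟩ := hstalk c hc n hsc
  have hnX : ({n} : Finset N) ∈ X :=
    (hX d hd).2 {n} (Finset.singleton_subset_iff.mpr hnd) ⟨n, Finset.mem_singleton_self n⟩
  have hnsub : ({n} : Finset N) ⊆ d := Finset.singleton_subset_iff.mpr hnd
  have hInd : InStalk X d n := ⟨d, hd, subset_refl d, hnd⟩
  have hsd : s d = some n := (hcompat c hc d hd hcd n hsc).1 hInd
  refine ⟨hnX, ?_⟩
  cases hsn : s {n} with
  | none => exact absurd (hsd.symm.trans (hnone {n} hnX d hd hnsub hsn)) (by simp)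
  | some m =>
    by_cases hIm : InStalk X d m
    · have := (hcompat {n} hnX d hd hnsub m hsn).1 hIm
      rw [this] at hsd
      exact hsd ▸ hsn.symm ▸ rfl
    · exact absurd (hsd.symm.trans ((hcompat {n} hnX d hd hnsub m hsn).2 hIm)) (by simp)
end

section
/- Let s be a global section of the activation sheaf A on X. If a cell c lies in the star of the active region of a node n but is not itself in the active region of n, then s(c) = ⊥. Consequently, the star of active(s, n) intersects no active region active(s, m) for any node m ≠ n. -/
/-- If a cell lies in the star of the active region of `n` but not in the active
region itself, then the section takes the value `⊥` there; consequently the star of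
the active region of `n` meets no active region of any other node. -/
theorem star_activeRegion_disjoint {N : Type*} (X : Finset (Finset N))
    (hX : IsComplex X) (s : Finset N → Option N) (hs : IsSection X s) (n : N) :
    (∀ c ∈ X, (∃ b ∈ X, s b = some n ∧ b ⊆ c) → s c ≠ some n → s c = none) ∧
    (∀ c ∈ X, (∃ b ∈ X, s b = some n ∧ b ⊆ c) → ∀ m : N, m ≠ n → s c ≠ some m) := by
  obtain ⟨h1, h2, h3⟩ := hs
  have key : ∀ c ∈ X, (∃ b ∈ X, s b = some n ∧ b ⊆ c) → s c ≠ some n → s c = none := by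
    intro c hc ⟨b, hb, hsb, hbc⟩ hne
    rcases h2 b hb c hc hbc n hsb with ⟨hpos, hneg⟩
    by_cases hst : InStalk X c n
    · exact absurd (hpos hst) hne
    · exact hneg hst
  refine ⟨key, ?_⟩
  intro c hc hex m hm hsm
  by_cases hne : s c = some n
  · exact hm (Option.some.inj (hsm ▸ hne))
  · rw [key c hc hex hne] at hsm; exact Option.some_ne_none m hsm.symm
end

section
/- The active region of a node is independent of the global section: if r and s are global sections of the activation sheaf A on X, and n is a node with both active(s, n) and active(r, n) nonempty, then active(s, n) = active(r, n). -/
/-- Going down: if `e ∈ X`, `c ⊆ e`, and `s e = some n`, then `s c = some n`. -/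
lemma section_down {N : Type*} (X : Finset (Finset N)) (s : Finset N → Option N)
    (hs : IsSection X s) (c e : Finset N) (hc : c ∈ X) (he : e ∈ X) (hce : c ⊆ e)
    (n : N) (hn : s e = some n) : s c = some n := by
  rcases hcase : s c with _ | m
  · exact absurd (hs.2.2 c hc e he hce hcase) (by simp [hn])
  · by_cases hst : InStalk X e m
    · have := (hs.2.1 c hc e he hce m hcase).1 hst
      rw [this] at hn; exact hn
    · exact absurd ((hs.2.1 c hc e he hce m hcase).2 hst) (by simp [hn])

/-- If `s c = some n` then `s {n} = some n`. -/
lemma section_singleton {N : Type*} (X : Finset (Finset N))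
    (hX : IsComplex X) (s : Finset N → Option N) (hs : IsSection X s)
    (c : Finset N) (hc : c ∈ X) (n : N) (h : s c = some n) : s {n} = some n := by
  classical
  obtain ⟨d, hd, hcd, hnd⟩ := hs.1 c hc n h
  have hcn : c ∪ {n} ⊆ d := Finset.union_subset hcd (by simpa using hnd)
  have he : c ∪ {n} ∈ X := (hX d hd).2 _ hcn ⟨n, by simp⟩
  have hn1 : ({n} : Finset N) ∈ X := (hX d hd).2 _ (by simpa using hnd) ⟨n, by simp⟩
  have hse : s (c ∪ {n}) = some n :=
    (hs.2.1 c hc _ he Finset.subset_union_left n h).1 ⟨d, hd, hcn, hnd⟩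
  exact section_down X s hs {n} (c ∪ {n}) hn1 he Finset.subset_union_right n hse

/-- If `s {n} = some n` and `n` is in the stalk at `c ∈ X`, then `s c = some n`. -/
lemma section_of_stalk {N : Type*} (X : Finset (Finset N))
    (hX : IsComplex X) (s : Finset N → Option N) (hs : IsSection X s)
    (n : N) (hsn : s {n} = some n) (c : Finset N) (hc : c ∈ X)
    (hst : InStalk X c n) : s c = some n := by
  classical
  obtain ⟨d, hd, hcd, hnd⟩ := hst
  have hcn : c ∪ {n} ⊆ d := Finset.union_subset hcd (by simpa using hnd)
  have he : c ∪ {n} ∈ X := (hX d hd).2 _ hcn ⟨n, by simp⟩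
  have hn1 : ({n} : Finset N) ∈ X := (hX d hd).2 _ (by simpa using hnd) ⟨n, by simp⟩
  have hse : s (c ∪ {n}) = some n :=
    (hs.2.1 {n} hn1 _ he Finset.subset_union_right n hsn).1 ⟨d, hd, hcn, hnd⟩
  exact section_down X s hs c (c ∪ {n}) hc he Finset.subset_union_left n hse

/-- The active region of a node is independent of the global section: if both active
regions are nonempty then they coincide. -/
theorem activeRegion_section_independent {N : Type*} (X : Finset (Finset N))
    (hX : IsComplex X) (r s : Finset N → Option N)
    (hr : IsSection X r) (hs : IsSection X s) (n : N)
    (hrne : ∃ c ∈ X, r c = some n) (hsne : ∃ c ∈ X, s c = some n) :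
    ∀ c ∈ X, s c = some n ↔ r c = some n := by
  obtain ⟨cr, hcr, hrn⟩ := hrne
  obtain ⟨cs, hcs, hsn⟩ := hsne
  have hr1 : r {n} = some n := section_singleton X hX r hr cr hcr n hrn
  have hs1 : s {n} = some n := section_singleton X hX s hs cs hcs n hsn
  intro c hc
  constructor
  · intro h
    exact section_of_stalk X hX r hr n hr1 c hc (hs.1 c hc n h)
  · intro h
    exact section_of_stalk X hX s hs n hs1 c hc (hr.1 c hc n h)
end

section
/- If s is a global section of the activation sheaf, n a node with s({n}) = n, and d any cell of X containing n, then s(d) = n and s(c) = n for every nonempty subset c of d. Hence the active region of n contains the closure of the star of {n}. -/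
/-- If `s {n} = n` then every cell containing `n`, and every nonempty face of such a
cell, lies in the active region of `n`: the active region contains the closure of
the star of `{n}`. -/
theorem activeRegion_contains_closure_star {N : Type*} [DecidableEq N]
    (X : Finset (Finset N)) (hX : IsComplex X)
    (s : Finset N → Option N) (hs : IsSection X s) (n : N)
    (hn : s {n} = some n) :
    ∀ d ∈ X, n ∈ d →
      s d = some n ∧ ∀ c : Finset N, c ⊆ d → c.Nonempty → s c = some n := by
  obtain ⟨h1, h2, h3⟩ := hs
  intro d hd hnd
  have hsing : ({n} : Finset N) ∈ X :=
    (hX d hd).2 {n} (Finset.singleton_subset_iff.mpr hnd) (Finset.singleton_nonempty n)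
  have hsub : ({n} : Finset N) ⊆ d := Finset.singleton_subset_iff.mpr hnd
  have hstalk : InStalk X d n := ⟨d, hd, subset_rfl, hnd⟩
  have hsd : s d = some n := ((h2 _ hsing _ hd hsub n hn).1) hstalk
  refine ⟨hsd, fun c hc hcne => ?_⟩
  have hcX : c ∈ X := (hX d hd).2 c hc hcne
  cases hsc : s c with
  | none => exact absurd (hsd ▸ h3 c hcX d hd hc hsc) (by simp)
  | some m =>
    rcases (h2 c hcX d hd hc m hsc) with ⟨hpos, hneg⟩
    by_cases hst : InStalk X d m
    · have hmn : m = n := by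
        have := hpos hst
        rw [hsd] at this
        exact (Option.some.injEq _ _ ▸ this).symm
      rw [hmn]
    · exact absurd (hsd ▸ hneg hst) (by simp)
end

section
/- For an activation sheaf on a finite link complex with at least one cell, the assignment sending every cell to ⊥ is a global section (the empty transmission pattern), and for each node n the assignment sending each cell c to n if c ∪ {n} ∈ X and to ⊥ otherwise is a global section, provided X is the clique complex of its 1-skeleton. -/
/-- For a clique complex, the all-`⊥` assignment is a global section of the
activation sheaf, and for each node `n` the assignment sending `c` to `n` when
`c ∪ {n} ∈ X` and to `⊥` otherwise is a global section. -/
theorem blank_and_single_transmitter_sections {N : Type*} [DecidableEq N]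
    (X : Finset (Finset N)) (hX : IsComplex X) (hXne : X.Nonempty)
    (hclique : ∀ c : Finset N, c.Nonempty → (∀ v ∈ c, ({v} : Finset N) ∈ X) →
      (c ∈ X ↔ ∀ u ∈ c, ∀ v ∈ c, u ≠ v → ({u, v} : Finset N) ∈ X)) :
    IsSection X (fun _ => none) ∧
    ∀ n : N, ({n} : Finset N) ∈ X →
      IsSection X (fun c => if insert n c ∈ X then some n else none) := by
  constructor
  · refine ⟨fun c hc n h => by simp at h, fun c hc d hd hcd n h => by simp at h,
      fun c hc d hd hcd h => rfl⟩
  · intro n hn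
    refine ⟨?_, ?_, ?_⟩
    · intro c hc m h
      simp only at h
      split_ifs at h with hi
      · cases h
        exact ⟨insert n c, hi, Finset.subset_insert _ _, Finset.mem_insert_self _ _⟩
    · intro c hc d hd hcd m h
      simp only at h
      split_ifs at h with hi
      · cases h
        constructor
        · intro ⟨e, he, hde, hne⟩
          have : insert n d ∈ X :=
            (hX e he).2 _ (Finset.insert_subset hne hde) ⟨n, Finset.mem_insert_self _ _⟩
          simp [this]
        · intro hns
          have : insert n d ∉ X := fun h' =>
            hns ⟨insert n d, h', Finset.subset_insert _ _, Finset.mem_insert_self _ _⟩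
          simp [this]
    · intro c hc d hd hcd h
      simp only at h ⊢
      split_ifs at h with hi
      split_ifs with hj
      · exact absurd ((hX _ hj).2 _ (Finset.insert_subset_insert _ hcd)
          ⟨n, Finset.mem_insert_self _ _⟩) hi
      · rfl
end

section
/- In the time-dependent link complex (the clique complex of the time-dependent link graph), every cell of dimension at least 1 (containing at least two vertices) either lies entirely within a single timeslice, or is exactly an edge of the form {(n, t), (n, t+1)} for a single node n. -/
/-- The edge relation of the time-dependent link graph on vertex set `N × ℤ`. -/
def TimeLinkAdj {N : Type*} (s : N → ℤ → N → ℝ) (T : ℝ) (a b : N × ℤ) : Prop :=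
  (a.2 = b.2 ∧ a.1 ≠ b.1 ∧ s a.1 a.2 b.1 > T ∧ s b.1 b.2 a.1 > T) ∨
  (a.1 = b.1 ∧ (b.2 = a.2 + 1 ∨ a.2 = b.2 + 1))

/-- A cell of the time-dependent link complex (the clique complex of the
time-dependent link graph): a nonempty finite set of vertices, pairwise adjacent. -/
def TimeLinkCell {N : Type*} (s : N → ℤ → N → ℝ) (T : ℝ) (c : Finset (N × ℤ)) : Prop :=
  c.Nonempty ∧ ∀ a ∈ c, ∀ b ∈ c, a ≠ b → TimeLinkAdj s T a b

/-- Every cell of the time-dependent link complex with at least two vertices either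
lies entirely within a single timeslice, or is exactly an edge `{(n,t), (n,t+1)}`
joining two consecutive copies of a single node. -/
theorem timeLink_cells_classified {N : Type*} [DecidableEq N]
    (s : N → ℤ → N → ℝ) (T : ℝ) (c : Finset (N × ℤ))
    (hc : TimeLinkCell s T c) (hcard : 2 ≤ c.card) :
    (∃ t : ℤ, ∀ v ∈ c, v.2 = t) ∨
    (∃ (n : N) (t : ℤ), c = {(n, t), (n, t + 1)}) := by
  obtain ⟨hne, hadj⟩ := hc
  by_cases hsame : ∀ v ∈ c, ∀ w ∈ c, v.2 = w.2
  · obtain ⟨v0, hv0⟩ := hne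
    exact Or.inl ⟨v0.2, fun v hv => hsame v hv v0 hv0⟩
  · push_neg at hsame
    obtain ⟨a, ha, b, hb, hab2⟩ := hsame
    have habne : a ≠ b := fun h => hab2 (by rw [h])
    have hadj_ab := hadj a ha b hb habne
    have h1 : a.1 = b.1 ∧ (b.2 = a.2 + 1 ∨ a.2 = b.2 + 1) := by
      rcases hadj_ab with h | h
      · exact absurd h.1 hab2
      · exact h
    obtain ⟨heq1, htime⟩ := h1
    -- Show c ⊆ {a, b}
    have hsub : ∀ v ∈ c, v = a ∨ v = b := by
      intro v hv
      by_contra hcon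
      push_neg at hcon
      obtain ⟨hva, hvb⟩ := hcon
      have hA := hadj v hv a ha hva
      have hB := hadj v hv b hb hvb
      -- Case on whether v.2 = a.2, v.2 = b.2, or neither
      by_cases hv2a : v.2 = a.2
      · -- then v.2 ≠ b.2, so v.1 = b.1 = a.1 and time relation
        have hv2b : v.2 ≠ b.2 := fun h => hab2 (hv2a ▸ h)
        rcases hB with h | h
        · exact hv2b h.1
        · -- v.1 = b.1 = a.1, v.2 = a.2 so v = a
          have : v.2 = a.2 ∧ (b.2 = v.2 + 1 ∨ v.2 = b.2 + 1) := ⟨hv2a, h.2⟩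
          rcases hA with h' | h'
          · exact h'.2.1 (h.1.trans heq1.symm) |>.elim
          · omega
      · rcases hA with h | h
        · exact hv2a h.1
        · by_cases hv2b : v.2 = b.2
          · rcases hB with h' | h'
            · exact h'.2.1 (h.1.trans heq1)
            · omega
          · rcases hB with h' | h'
            · exact hv2b h'.1
            · omega
    -- c = {a, b}
    have hceq : c = {a, b} := by
      apply Finset.Subset.antisymm
      · intro v hv
        rcases hsub v hv with h | h <;> simp [h]
      · intro v hv
        rcases Finset.mem_insert.mp hv with h | h
        · exact h ▸ ha
        · exact (Finset.mem_singleton.mp h) ▸ hb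
    right
    rcases htime with h | h
    · refine ⟨a.1, a.2, ?_⟩
      rw [hceq]
      have : b = (a.1, a.2 + 1) := by
        ext
        · exact heq1.symm
        · exact h
      rw [this]
    · refine ⟨a.1, b.2, ?_⟩
      rw [hceq]
      have hb' : b = (a.1, b.2) := by ext; exacts [heq1.symm, rfl]
      have ha' : a = (a.1, b.2 + 1) := by ext; exacts [rfl, h]
      rw [hb', ha', Finset.pair_comm]
end
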